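/- For a, p, q > 0, ∫₀^∞ ((1 + a/(qx))^{qx} - (1 + a/(px))^{px})/x dx = (e^a - 1) · ln(q/p). -/

import Mathlib

open MeasureTheory Real Set
open Filter Topology

noncomputable def FF (a t : ℝ) : ℝ := Real.exp (Real.log (1 + a / t) * t)

lemma gg_nonneg {a t : ℝ} (ha : 0 < a) (ht : 0 < t) : 0 ≤ Real.log (1 + a / t) * t := by
  have h1 : (1:ℝ) ≤ 1 + a / t := by have := div_pos ha ht; linarith
  exact mul_nonneg (Real.log_nonneg h1) ht.le

lemma gg_le {a t : ℝ} (ha : 0 < a) (ht : 0 < t) : Real.log (1 + a / t) * t ≤ a := by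
  have h0 : (0:ℝ) < 1 + a / t := by positivity
  have h1 : Real.log (1 + a / t) ≤ a / t := by
    have := Real.log_le_sub_one_of_pos h0; linarith
  calc Real.log (1 + a / t) * t ≤ (a / t) * t := by nlinarith
    _ = a := by field_simp

lemma FF_one_le {a t : ℝ} (ha : 0 < a) (ht : 0 < t) : 1 ≤ FF a t := by
  have := Real.exp_le_exp.2 (gg_nonneg ha ht)
  simpa [FF] using this

lemma FF_le_exp {a t : ℝ} (ha : 0 < a) (ht : 0 < t) : FF a t ≤ Real.exp a :=
  Real.exp_le_exp.2 (gg_le ha ht)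

lemma exp_sub_one_le {s : ℝ} (hs : 0 ≤ s) : Real.exp s - 1 ≤ s * Real.exp s := by
  have h1 : -s + 1 ≤ Real.exp (-s) := Real.add_one_le_exp (-s)
  rw [Real.exp_neg] at h1
  have h2 := Real.exp_pos s
  have h3 : (1 - s) * Real.exp s ≤ 1 := by
    rw [show (1:ℝ) - s = -s + 1 by ring]
    calc (-s + 1) * Real.exp s ≤ (Real.exp s)⁻¹ * Real.exp s := by nlinarith
      _ = 1 := inv_mul_cancel₀ h2.ne'
  nlinarith

lemma log_le_two_sqrt {u : ℝ} (hu : 0 ≤ u) : Real.log (1 + u) ≤ 2 * Real.sqrt u := by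
  have h0 : (0:ℝ) < 1 + u := by linarith
  have h1 : Real.sqrt (1 + u) ≤ 1 + Real.sqrt u := by
    have h2 : Real.sqrt (1 + u) ≤ Real.sqrt ((1 + Real.sqrt u) ^ 2) := by
      apply Real.sqrt_le_sqrt
      nlinarith [Real.sq_sqrt hu, Real.sqrt_nonneg u]
    rwa [Real.sqrt_sq (by positivity)] at h2
  have h3 : Real.log (1 + u) = 2 * Real.log (Real.sqrt (1 + u)) := by
    rw [Real.log_sqrt h0.le]; ring
  have h4 := Real.log_le_sub_one_of_pos (Real.sqrt_pos.2 h0)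
  rw [h3]; nlinarith

lemma FF_sub_one_le {a t : ℝ} (ha : 0 < a) (ht : 0 < t) :
    FF a t - 1 ≤ 2 * Real.exp a * (Real.sqrt a * Real.sqrt t) := by
  have hg0 := gg_nonneg ha ht
  have hgle := gg_le ha ht
  have h1 : FF a t - 1 ≤ (Real.log (1 + a / t) * t) * Real.exp a := by
    have := exp_sub_one_le hg0
    have hmono : Real.exp (Real.log (1 + a / t) * t) ≤ Real.exp a := Real.exp_le_exp.2 hgle
    rw [FF]; nlinarith [Real.exp_pos (Real.log (1 + a / t) * t)]
  have h2 : Real.log (1 + a / t) * t ≤ Real.sqrt a * Real.sqrt t * 2 := by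
    have h3 := log_le_two_sqrt (le_of_lt (div_pos ha ht))
    have h4 : Real.sqrt (a / t) * t = Real.sqrt a * Real.sqrt t := by
      rw [Real.sqrt_div ha.le]
      rw [show Real.sqrt a / Real.sqrt t * t = Real.sqrt a * (t / Real.sqrt t) by ring,
        Real.div_sqrt]
    nlinarith [Real.sqrt_nonneg (a/t)]
  nlinarith [Real.exp_pos a]

lemma gg_ge {a t : ℝ} (ha : 0 < a) (ht : 0 < t) :
    a - a ^ 2 / t ≤ Real.log (1 + a / t) * t := by
  set u := a / t with hu
  have hu0 : 0 < u := div_pos ha ht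
  have h1 : u / (1 + u) ≤ Real.log (1 + u) := by
    have h2 := Real.log_le_sub_one_of_pos (show (0:ℝ) < (1 + u)⁻¹ by positivity)
    rw [Real.log_inv] at h2
    have h3 : (1 + u)⁻¹ - 1 = -(u / (1 + u)) := by field_simp; ring
    linarith [h2, h3.le, h3.ge]
  have key : a - a ^ 2 / t ≤ (u / (1 + u)) * t := by
    rw [hu]
    rw [show a / t / (1 + a / t) * t = a * t / (t + a) by field_simp]
    rw [show a - a ^ 2 / t = (a * t - a ^ 2) / t by field_simp]
    rw [div_le_div_iff₀ ht (by positivity : (0:ℝ) < t + a)]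
    nlinarith
  nlinarith

lemma exp_sub_FF_le {a t : ℝ} (ha : 0 < a) (ht : 0 < t) :
    Real.exp a - FF a t ≤ Real.exp a * (a ^ 2 / t) := by
  set g := Real.log (1 + a / t) * t with hg
  have hgle := gg_le ha ht
  have hgge := gg_ge ha ht
  have h1 : 1 - (a - g) ≤ Real.exp (g - a) := by
    have := Real.add_one_le_exp (g - a); linarith
  have h2 : FF a t = Real.exp a * Real.exp (g - a) := by
    rw [FF, ← Real.exp_add]; congr 1; rw [hg]; ring
  rw [h2]
  have h3 := Real.exp_pos a
  nlinarith

lemma FF_contOn {a : ℝ} (ha : 0 < a) : ContinuousOn (fun t => FF a t) (Ioi (0:ℝ)) := by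
  apply Real.continuous_exp.comp_continuousOn
  apply ContinuousOn.mul _ continuousOn_id
  apply ContinuousOn.log
  · exact continuousOn_const.add (continuousOn_const.div continuousOn_id
      (fun t ht => ne_of_gt (mem_Ioi.1 ht)))
  · intro t ht
    have : 0 < a / t := div_pos ha (mem_Ioi.1 ht)
    positivity

lemma hh_contOn {a : ℝ} (ha : 0 < a) : ContinuousOn (fun y => FF a y / y) (Ioi (0:ℝ)) :=
  (FF_contOn ha).div continuousOn_id (fun t ht => ne_of_gt (mem_Ioi.1 ht))

lemma hh_intervalIntegrable {a : ℝ} (ha : 0 < a) {u v : ℝ} (hu : 0 < u) (hv : 0 < v) :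
    IntervalIntegrable (fun y => FF a y / y) volume u v := by
  apply ContinuousOn.intervalIntegrable
  apply (hh_contOn ha).mono
  intro x hx
  have := hx.1
  simp only [mem_Ioi]
  calc (0:ℝ) < min u v := lt_min hu hv
    _ ≤ x := hx.1

lemma subst_step {a c ε R : ℝ} (hc : 0 < c) :
    ∫ x in ε..R, FF a (c * x) / x = ∫ y in c * ε..c * R, FF a y / y := by
  rw [← intervalIntegral.mul_integral_comp_mul_left (f := fun y => FF a y / y) (c := c) (a := ε) (b := R),
    ← intervalIntegral.integral_const_mul]
  apply intervalIntegral.integral_congr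
  intro x _
  rcases eq_or_ne x 0 with h | h
  · simp [h]
  · field_simp

lemma pointwise_low {a w y : ℝ} (ha : 0 < a) (hw : 0 < w) (hwy : w ≤ y) :
    (FF a y - 1) / y ≤ 2 * Real.exp a * Real.sqrt a / Real.sqrt w := by
  have hy : 0 < y := lt_of_lt_of_le hw hwy
  have h1 := FF_sub_one_le ha hy
  rw [div_le_div_iff₀ hy (Real.sqrt_pos.2 hw)]
  have hs : Real.sqrt w ≤ Real.sqrt y := Real.sqrt_le_sqrt hwy
  have hsy : Real.sqrt y ^ 2 = y := Real.sq_sqrt hy.le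
  have hsw : (0:ℝ) < Real.sqrt w := Real.sqrt_pos.2 hw
  have hsy0 : (0:ℝ) ≤ Real.sqrt y := Real.sqrt_nonneg y
  have hC : (0:ℝ) ≤ 2 * Real.exp a * Real.sqrt a :=
    by positivity
  have hF1 : 1 ≤ FF a y := FF_one_le ha hy
  calc (FF a y - 1) * Real.sqrt w ≤ (2 * Real.exp a * (Real.sqrt a * Real.sqrt y)) * Real.sqrt y := by
        nlinarith [Real.exp_pos a, Real.sqrt_nonneg a]
    _ = 2 * Real.exp a * Real.sqrt a * (Real.sqrt y * Real.sqrt y) := by ring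
    _ = 2 * Real.exp a * Real.sqrt a * y := by rw [Real.mul_self_sqrt hy.le]

-- lower-end estimate
lemma B_est {a p q ε : ℝ} (ha : 0 < a) (hp : 0 < p) (hpq : p ≤ q) (hε : 0 < ε) :
    Real.log (q / p) ≤ (∫ y in p * ε..q * ε, FF a y / y) ∧
    (∫ y in p * ε..q * ε, FF a y / y) ≤
      Real.log (q / p) + 2 * Real.exp a * Real.sqrt a / Real.sqrt (p * ε) * (q * ε - p * ε) := by
  have hq : 0 < q := lt_of_lt_of_le hp hpq
  have hpe : 0 < p * ε := by positivity
  have hqe : 0 < q * ε := by positivity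
  have hle : p * ε ≤ q * ε := by nlinarith
  have hsub : ∀ y ∈ Icc (p * ε) (q * ε), (0:ℝ) < y := fun y hy => lt_of_lt_of_le hpe hy.1
  have hint1 : IntervalIntegrable (fun y : ℝ => y⁻¹) volume (p * ε) (q * ε) := by
    apply ContinuousOn.intervalIntegrable
    apply ContinuousOn.inv₀ continuousOn_id
    intro y hy
    rw [uIcc_of_le hle] at hy
    exact ne_of_gt (hsub y hy)
  have hint2 : IntervalIntegrable (fun y : ℝ => (FF a y - 1) / y) volume (p * ε) (q * ε) := by
    apply ContinuousOn.intervalIntegrable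
    apply ContinuousOn.div ((FF_contOn ha).mono _ |>.sub continuousOn_const) continuousOn_id
    · intro y hy
      rw [uIcc_of_le hle] at hy
      exact ne_of_gt (hsub y hy)
    · intro y hy
      rw [uIcc_of_le hle] at hy
      exact hsub y hy
  have hsplit : (∫ y in p * ε..q * ε, FF a y / y)
      = (∫ y in p * ε..q * ε, (y:ℝ)⁻¹) + ∫ y in p * ε..q * ε, (FF a y - 1) / y := by
    rw [← intervalIntegral.integral_add hint1 hint2]
    apply intervalIntegral.integral_congr
    intro y hy
    rw [uIcc_of_le hle] at hy
    have hy0 : y ≠ 0 := ne_of_gt (hsub y hy)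
    field_simp
    ring
  have hinv : (∫ y in p * ε..q * ε, (y:ℝ)⁻¹) = Real.log (q / p) := by
    rw [integral_inv_of_pos hpe hqe, mul_comm p ε, mul_comm q ε,
      mul_div_mul_left q p (ne_of_gt hε)]
  have hlow : 0 ≤ ∫ y in p * ε..q * ε, (FF a y - 1) / y := by
    apply intervalIntegral.integral_nonneg hle
    intro y hy
    have hy0 := hsub y hy
    have := FF_one_le ha hy0
    apply div_nonneg (by linarith) hy0.le
  have hup : (∫ y in p * ε..q * ε, (FF a y - 1) / y)
      ≤ 2 * Real.exp a * Real.sqrt a / Real.sqrt (p * ε) * (q * ε - p * ε) := by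
    have hmono := intervalIntegral.integral_mono_on hle hint2
      (intervalIntegrable_const (c := 2 * Real.exp a * Real.sqrt a / Real.sqrt (p * ε)))
      (fun y hy => pointwise_low ha hpe hy.1)
    rw [intervalIntegral.integral_const] at hmono
    calc (∫ y in p * ε..q * ε, (FF a y - 1) / y)
        ≤ (q * ε - p * ε) • (2 * Real.exp a * Real.sqrt a / Real.sqrt (p * ε)) := hmono
      _ = 2 * Real.exp a * Real.sqrt a / Real.sqrt (p * ε) * (q * ε - p * ε) := by
          rw [smul_eq_mul]; ring
  constructor
  · rw [hsplit, hinv]; linarith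
  · rw [hsplit, hinv]; linarith

lemma pointwise_high {a w y : ℝ} (ha : 0 < a) (hw : 0 < w) (hwy : w ≤ y) :
    (Real.exp a - FF a y) / y ≤ Real.exp a * a ^ 2 / w ^ 2 := by
  have hy : 0 < y := lt_of_lt_of_le hw hwy
  have h1 := exp_sub_FF_le ha hy
  rw [div_le_div_iff₀ hy (by positivity : (0:ℝ) < w ^ 2)]
  rcases le_or_gt (Real.exp a - FF a y) 0 with h | h
  · have : (Real.exp a - FF a y) * w ^ 2 ≤ 0 := mul_nonpos_of_nonpos_of_nonneg h (by positivity)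
    have h4 : (0:ℝ) ≤ Real.exp a * a ^ 2 * y := by positivity
    linarith
  · have h3 : Real.exp a * (a ^ 2 / y) * y ^ 2 = Real.exp a * a ^ 2 * y := by
      field_simp
    nlinarith [sq_nonneg y, sq_nonneg w, mul_le_mul_of_nonneg_left (mul_self_le_mul_self hw.le hwy) h.le]

lemma A_est {a p q R : ℝ} (ha : 0 < a) (hp : 0 < p) (hpq : p ≤ q) (hR : 0 < R) :
    Real.exp a * Real.log (q / p) - Real.exp a * a ^ 2 / (p * R) ^ 2 * (q * R - p * R)
      ≤ (∫ y in p * R..q * R, FF a y / y) ∧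
    (∫ y in p * R..q * R, FF a y / y) ≤ Real.exp a * Real.log (q / p) := by
  have hq : 0 < q := lt_of_lt_of_le hp hpq
  have hpe : 0 < p * R := by positivity
  have hqe : 0 < q * R := by positivity
  have hle : p * R ≤ q * R := by nlinarith
  have hsub : ∀ y ∈ Icc (p * R) (q * R), (0:ℝ) < y := fun y hy => lt_of_lt_of_le hpe hy.1
  have hint1 : IntervalIntegrable (fun y : ℝ => Real.exp a * y⁻¹) volume (p * R) (q * R) := by
    apply ContinuousOn.intervalIntegrable
    apply ContinuousOn.mul continuousOn_const (ContinuousOn.inv₀ continuousOn_id _)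
    intro y hy
    rw [uIcc_of_le hle] at hy
    exact ne_of_gt (hsub y hy)
  have hint2 : IntervalIntegrable (fun y : ℝ => (Real.exp a - FF a y) / y) volume (p * R) (q * R) := by
    apply ContinuousOn.intervalIntegrable
    apply ContinuousOn.div (continuousOn_const.sub ((FF_contOn ha).mono _)) continuousOn_id
    · intro y hy
      rw [uIcc_of_le hle] at hy
      exact ne_of_gt (hsub y hy)
    · intro y hy
      rw [uIcc_of_le hle] at hy
      exact hsub y hy
  have hsplit : (∫ y in p * R..q * R, FF a y / y)
      = (∫ y in p * R..q * R, Real.exp a * (y:ℝ)⁻¹)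
        - ∫ y in p * R..q * R, (Real.exp a - FF a y) / y := by
    rw [← intervalIntegral.integral_sub hint1 hint2]
    apply intervalIntegral.integral_congr
    intro y hy
    rw [uIcc_of_le hle] at hy
    have hy0 : y ≠ 0 := ne_of_gt (hsub y hy)
    field_simp
    ring
  have hinv : (∫ y in p * R..q * R, Real.exp a * (y:ℝ)⁻¹) = Real.exp a * Real.log (q / p) := by
    rw [intervalIntegral.integral_const_mul, integral_inv_of_pos hpe hqe, mul_comm p R, mul_comm q R,
      mul_div_mul_left q p (ne_of_gt hR)]
  have hlow : 0 ≤ ∫ y in p * R..q * R, (Real.exp a - FF a y) / y := by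
    apply intervalIntegral.integral_nonneg hle
    intro y hy
    have hy0 := hsub y hy
    have := FF_le_exp ha hy0
    apply div_nonneg (by linarith) hy0.le
  have hup : (∫ y in p * R..q * R, (Real.exp a - FF a y) / y)
      ≤ Real.exp a * a ^ 2 / (p * R) ^ 2 * (q * R - p * R) := by
    have hmono := intervalIntegral.integral_mono_on hle hint2
      (intervalIntegrable_const (c := Real.exp a * a ^ 2 / (p * R) ^ 2))
      (fun y hy => pointwise_high ha hpe hy.1)
    rw [intervalIntegral.integral_const] at hmono
    calc (∫ y in p * R..q * R, (Real.exp a - FF a y) / y)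
        ≤ (q * R - p * R) • (Real.exp a * a ^ 2 / (p * R) ^ 2) := hmono
      _ = Real.exp a * a ^ 2 / (p * R) ^ 2 * (q * R - p * R) := by rw [smul_eq_mul]; ring
  constructor
  · rw [hsplit, hinv]; linarith
  · rw [hsplit, hinv]; linarith

lemma master_identity {a p q ε R : ℝ} (ha : 0 < a) (hp : 0 < p) (hq : 0 < q)
    (hε : 0 < ε) (hR : ε ≤ R) :
    ∫ x in ε..R, (FF a (q * x) - FF a (p * x)) / x
      = (∫ y in p * R..q * R, FF a y / y) - ∫ y in p * ε..q * ε, FF a y / y := by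
  have hR0 : 0 < R := lt_of_lt_of_le hε hR
  have hcomp : ∀ c : ℝ, 0 < c → IntervalIntegrable (fun x => FF a (c * x) / x) volume ε R := by
    intro c hc
    apply ContinuousOn.intervalIntegrable
    have hmap : ∀ x ∈ uIcc ε R, c * x ∈ Ioi (0:ℝ) := by
      intro x hx
      rw [uIcc_of_le hR] at hx
      have : 0 < x := lt_of_lt_of_le hε hx.1
      exact mem_Ioi.2 (by positivity)
    apply ContinuousOn.div
      (((FF_contOn ha).comp (continuousOn_const.mul continuousOn_id) hmap)) continuousOn_id
    intro x hx
    rw [uIcc_of_le hR] at hx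
    exact ne_of_gt (lt_of_lt_of_le hε hx.1)
  rw [show (fun x => (FF a (q * x) - FF a (p * x)) / x)
      = fun x => FF a (q * x) / x - FF a (p * x) / x by funext x; rw [sub_div]]
  rw [intervalIntegral.integral_sub (hcomp q hq) (hcomp p hp), subst_step hq, subst_step hp]
  have H : ∀ u v w : ℝ, 0 < u → 0 < v → 0 < w →
      (∫ y in u..v, FF a y / y) + (∫ y in v..w, FF a y / y) = ∫ y in u..w, FF a y / y :=
    fun u v w hu hv hw => intervalIntegral.integral_add_adjacent_intervals
      (hh_intervalIntegrable ha hu hv) (hh_intervalIntegrable ha hv hw)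
  have h1 := H (p * ε) (q * ε) (q * R) (by positivity) (by positivity) (by positivity)
  have h2 := H (p * ε) (p * R) (q * R) (by positivity) (by positivity) (by positivity)
  linarith

lemma G_contOn {a p q : ℝ} (ha : 0 < a) (hp : 0 < p) (hq : 0 < q) :
    ContinuousOn (fun x => (FF a (q * x) - FF a (p * x)) / x) (Ioi (0:ℝ)) := by
  have hcomp : ∀ c : ℝ, 0 < c → ContinuousOn (fun x => FF a (c * x)) (Ioi (0:ℝ)) := by
    intro c hc
    apply (FF_contOn ha).comp (continuousOn_const.mul continuousOn_id)
    intro x hx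
    have : 0 < x := mem_Ioi.1 hx
    exact mem_Ioi.2 (mul_pos hc this)
  exact ((hcomp q hq).sub (hcomp p hp)).div continuousOn_id
    (fun x hx => ne_of_gt (mem_Ioi.1 hx))

lemma G_integrable {a p q : ℝ} (ha : 0 < a) (hp : 0 < p) (hq : 0 < q) (hpq : p ≤ q) :
    IntegrableOn (fun x => (FF a (q * x) - FF a (p * x)) / x) (Ioi (0:ℝ)) volume := by
  set G := fun x => (FF a (q * x) - FF a (p * x)) / x with hG
  have habs : ∀ x : ℝ, 0 < x → |FF a (q * x) - FF a (p * x)|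
      ≤ min ((FF a (q * x) - 1) + (FF a (p * x) - 1))
            ((Real.exp a - FF a (q * x)) + (Real.exp a - FF a (p * x))) := by
    intro x hx
    have h1 := FF_one_le ha (show 0 < q * x by positivity)
    have h2 := FF_one_le ha (show 0 < p * x by positivity)
    have h3 := FF_le_exp ha (show 0 < q * x by positivity)
    have h4 := FF_le_exp ha (show 0 < p * x by positivity)
    rw [abs_le]
    refine ⟨?_, le_min (by linarith) (by linarith)⟩
    rw [neg_le]
    exact le_min (by linarith) (by linarith)
  -- part near 0
  have part1 : IntegrableOn G (Ioc (0:ℝ) 1) volume := by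
    set K := 2 * Real.exp a * Real.sqrt a * (Real.sqrt q + Real.sqrt p) with hK
    have hbound : IntegrableOn (fun x : ℝ => K * (Real.sqrt x)⁻¹) (Ioc (0:ℝ) 1) volume := by
      have h0 : IntegrableOn (fun x : ℝ => x ^ (-(1/2) : ℝ)) (Ioc (0:ℝ) 1) volume := by
        have := intervalIntegral.intervalIntegrable_rpow' (a := 0) (b := 1)
          (r := -(1/2)) (by norm_num)
        rwa [intervalIntegrable_iff_integrableOn_Ioc_of_le (by norm_num)] at this
      have h1 : IntegrableOn (fun x : ℝ => (Real.sqrt x)⁻¹) (Ioc (0:ℝ) 1) volume := by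
        apply h0.congr_fun _ measurableSet_Ioc
        intro x hx
        simp only
        rw [Real.rpow_neg hx.1.le, ← Real.sqrt_eq_rpow]
      exact h1.const_mul K
    apply hbound.integrable.mono'
    · exact ((G_contOn ha hp hq).mono Ioc_subset_Ioi_self).aestronglyMeasurable measurableSet_Ioc
    · rw [ae_restrict_iff' measurableSet_Ioc]
      filter_upwards with x hx
      obtain ⟨hx0, hx1⟩ := hx
      have hqx : 0 < q * x := by positivity
      have hpx : 0 < p * x := by positivity
      have key : |FF a (q * x) - FF a (p * x)| ≤ K * Real.sqrt x := by
        have h5 := (habs x hx0).trans (min_le_left _ _)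
        have h6 := FF_sub_one_le ha hqx
        have h7 := FF_sub_one_le ha hpx
        have e1 : Real.sqrt (q * x) = Real.sqrt q * Real.sqrt x := Real.sqrt_mul hq.le x
        have e2 : Real.sqrt (p * x) = Real.sqrt p * Real.sqrt x := Real.sqrt_mul hp.le x
        rw [e1] at h6; rw [e2] at h7
        rw [hK]; nlinarith [Real.sqrt_nonneg x]
      rw [hG]
      simp only [norm_div, Real.norm_eq_abs]
      rw [abs_of_pos hx0, div_le_iff₀ hx0]
      calc |FF a (q * x) - FF a (p * x)| ≤ K * Real.sqrt x := key
        _ = K * ((Real.sqrt x)⁻¹ * x) := by rw [inv_mul_eq_div, Real.div_sqrt]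
        _ = K * (Real.sqrt x)⁻¹ * x := by ring
  -- part near infinity
  have part2 : IntegrableOn G (Ioi (1:ℝ)) volume := by
    set K := Real.exp a * a ^ 2 * (q⁻¹ + p⁻¹) with hK
    have hbound : IntegrableOn (fun x : ℝ => K * x ^ (-2 : ℝ)) (Ioi (1:ℝ)) volume :=
      (integrableOn_Ioi_rpow_of_lt (by norm_num) one_pos).const_mul K
    apply hbound.integrable.mono'
    · exact ((G_contOn ha hp hq).mono (fun x (hx : x ∈ Ioi (1:ℝ)) => mem_Ioi.2 (lt_trans one_pos (mem_Ioi.1 hx)))).aestronglyMeasurable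
        measurableSet_Ioi
    · rw [ae_restrict_iff' measurableSet_Ioi]
      filter_upwards with x hx
      have hx0 : (0:ℝ) < x := lt_trans one_pos hx
      have hqx : 0 < q * x := by positivity
      have hpx : 0 < p * x := by positivity
      have key : |FF a (q * x) - FF a (p * x)| ≤ K * x⁻¹ := by
        have h5 := (habs x hx0).trans (min_le_right _ _)
        have h6 := exp_sub_FF_le ha hqx
        have h7 := exp_sub_FF_le ha hpx
        have e1 : a ^ 2 / (q * x) = a ^ 2 * q⁻¹ * x⁻¹ := by field_simp
        have e2 : a ^ 2 / (p * x) = a ^ 2 * p⁻¹ * x⁻¹ := by field_simp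
        rw [e1] at h6; rw [e2] at h7
        rw [hK]; nlinarith [Real.exp_pos a]
      rw [hG]
      simp only [norm_div, Real.norm_eq_abs]
      rw [abs_of_pos hx0, div_le_iff₀ hx0]
      calc |FF a (q * x) - FF a (p * x)| ≤ K * x⁻¹ := key
        _ = K * x ^ (-2:ℝ) * x := by
            rw [show (-2:ℝ) = -1 + -1 by norm_num, Real.rpow_add hx0,
              Real.rpow_neg_one]
            field_simp
  have := part1.union part2
  rwa [Ioc_union_Ioi_eq_Ioi zero_le_one] at this

lemma main_le {a p q : ℝ} (ha : 0 < a) (hp : 0 < p) (hq : 0 < q) (hpq : p ≤ q) :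
    ∫ x in Ioi (0:ℝ), (FF a (q * x) - FF a (p * x)) / x
      = (Real.exp a - 1) * Real.log (q / p) := by
  set G := fun x => (FF a (q * x) - FF a (p * x)) / x with hG
  have hInt := G_integrable ha hp hq hpq
  set s : ℕ → Set ℝ := fun n => Ioc ((n + 1 : ℝ)⁻¹) (n + 1) with hs
  have hsm : ∀ n, MeasurableSet (s n) := fun n => measurableSet_Ioc
  have hmono : Monotone s := by
    intro m n hmn
    apply Ioc_subset_Ioc
    · apply inv_anti₀ (by positivity)
      exact_mod_cast by exact_mod_cast add_le_add_left (Nat.cast_le.2 hmn) 1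
    · exact_mod_cast add_le_add_left (Nat.cast_le.2 hmn) 1
  have hunion : (⋃ n, s n) = Ioi (0:ℝ) := by
    ext x
    simp only [mem_iUnion, mem_Ioc, mem_Ioi, hs]
    constructor
    · rintro ⟨n, h1, _⟩
      exact lt_trans (by positivity) h1
    · intro hx
      obtain ⟨n, hn⟩ := exists_nat_gt (max x⁻¹ x)
      have h1 : x⁻¹ < n + 1 := lt_trans (lt_of_le_of_lt (le_max_left _ _) hn) (by linarith)
      have h2 : x ≤ n + 1 := le_of_lt (lt_trans (lt_of_le_of_lt (le_max_right _ _) hn) (by linarith))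
      refine ⟨n, ?_, h2⟩
      rw [inv_lt_comm₀ (by positivity) hx]
      exact h1
  have htend1 : Tendsto (fun n => ∫ x in s n, G x) atTop (𝓝 (∫ x in Ioi (0:ℝ), G x)) := by
    have := tendsto_setIntegral_of_monotone hsm hmono (hunion ▸ hInt)
    rwa [hunion] at this
  set L := Real.log (q / p) with hL
  have heq : ∀ n : ℕ, (∫ x in s n, G x)
      = (∫ y in p * (n+1)..q * (n+1), FF a y / y)
        - ∫ y in p * (n+1:ℝ)⁻¹..q * (n+1:ℝ)⁻¹, FF a y / y := by
    intro n
    have hε : (0:ℝ) < (n+1:ℝ)⁻¹ := by positivity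
    have hεR : ((n:ℝ)+1)⁻¹ ≤ (n:ℝ)+1 := by
      have h1 : (1:ℝ) ≤ (n:ℝ)+1 := by
        have := Nat.cast_nonneg (α := ℝ) n; linarith
      have h2 : ((n:ℝ)+1)⁻¹ ≤ 1 := by
        rw [inv_le_one_iff₀]; right; exact h1
      linarith
    rw [hs]
    rw [← intervalIntegral.integral_of_le hεR]
    exact master_identity ha hp hq hε hεR
  have htendA : Tendsto (fun n : ℕ => ∫ y in p * (n+1)..q * (n+1), FF a y / y) atTop
      (𝓝 (Real.exp a * L)) := by
    have hbnd : ∀ n : ℕ, Real.exp a * L - (Real.exp a * a ^ 2 * (q - p) / p ^ 2) * (1/((n:ℝ)+1))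
        ≤ (∫ y in p * (n+1)..q * (n+1), FF a y / y)
        ∧ (∫ y in p * (n+1)..q * (n+1), FF a y / y) ≤ Real.exp a * L := by
      intro n
      have hR : (0:ℝ) < (n:ℝ) + 1 := by positivity
      have h := A_est ha hp hpq hR
      have e1 : Real.exp a * a ^ 2 / (p * ((n:ℝ)+1)) ^ 2 * (q * ((n:ℝ)+1) - p * ((n:ℝ)+1))
          = (Real.exp a * a ^ 2 * (q - p) / p ^ 2) * (1/((n:ℝ)+1)) := by
        field_simp
      exact ⟨by rw [← e1]; exact h.1, h.2⟩
    apply tendsto_of_tendsto_of_tendsto_of_le_of_le (g := fun n : ℕ =>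
        Real.exp a * L - (Real.exp a * a ^ 2 * (q - p) / p ^ 2) * (1/((n:ℝ)+1)))
        (h := fun _ : ℕ => Real.exp a * L)
    · have h0 : Tendsto (fun n : ℕ => 1/((n:ℝ)+1)) atTop (𝓝 0) :=
        tendsto_one_div_add_atTop_nhds_zero_nat
      have := (h0.const_mul (Real.exp a * a ^ 2 * (q - p) / p ^ 2)).const_sub (Real.exp a * L)
      simpa using this
    · exact tendsto_const_nhds
    · exact fun n => (hbnd n).1
    · exact fun n => (hbnd n).2
  have htendB : Tendsto (fun n : ℕ => ∫ y in p * (n+1:ℝ)⁻¹..q * (n+1:ℝ)⁻¹, FF a y / y) atTop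
      (𝓝 L) := by
    set C := 2 * Real.exp a * Real.sqrt a * (q - p) / Real.sqrt p with hC
    have hbnd : ∀ n : ℕ, L ≤ (∫ y in p * (n+1:ℝ)⁻¹..q * (n+1:ℝ)⁻¹, FF a y / y)
        ∧ (∫ y in p * (n+1:ℝ)⁻¹..q * (n+1:ℝ)⁻¹, FF a y / y)
          ≤ L + C * Real.sqrt ((n+1:ℝ)⁻¹) := by
      intro n
      have hε : (0:ℝ) < ((n:ℝ)+1)⁻¹ := by positivity
      have h := B_est ha hp hpq hε
      have e1 : 2 * Real.exp a * Real.sqrt a / Real.sqrt (p * ((n:ℝ)+1)⁻¹)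
            * (q * ((n:ℝ)+1)⁻¹ - p * ((n:ℝ)+1)⁻¹)
          = C * Real.sqrt (((n:ℝ)+1)⁻¹) := by
        set ε := ((n:ℝ)+1)⁻¹
        rw [hC, Real.sqrt_mul hp.le]
        rw [show q * ε - p * ε = (q - p) * ε by ring]
        rw [show 2 * Real.exp a * Real.sqrt a / (Real.sqrt p * Real.sqrt ε) * ((q - p) * ε)
          = 2 * Real.exp a * Real.sqrt a * (q - p) / Real.sqrt p * (ε / Real.sqrt ε) by ring]
        rw [Real.div_sqrt]
      exact ⟨h.1, by rw [← e1]; exact h.2⟩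
    apply tendsto_of_tendsto_of_tendsto_of_le_of_le (g := fun _ : ℕ => L)
        (h := fun n : ℕ => L + C * Real.sqrt ((n+1:ℝ)⁻¹))
    · exact tendsto_const_nhds
    · have h0 : Tendsto (fun n : ℕ => ((n:ℝ)+1)⁻¹) atTop (𝓝 0) := by
        simpa [one_div] using tendsto_one_div_add_atTop_nhds_zero_nat (𝕜 := ℝ)
      have h1 : Tendsto (fun n : ℕ => Real.sqrt (((n:ℝ)+1)⁻¹)) atTop (𝓝 0) := by
        have h2 := (Real.continuous_sqrt.tendsto 0).comp h0
        simp only [Real.sqrt_zero] at h2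
        exact h2
      have := (h1.const_mul C).const_add L
      simpa using this
    · exact fun n => (hbnd n).1
    · exact fun n => (hbnd n).2
  have htend2 : Tendsto (fun n => ∫ x in s n, G x) atTop (𝓝 ((Real.exp a - 1) * L)) := by
    have := htendA.sub htendB
    rw [show Real.exp a * L - L = (Real.exp a - 1) * L by ring] at this
    apply this.congr
    intro n
    exact (heq n).symm
  exact tendsto_nhds_unique htend1 htend2

theorem frullani_compound (a p q : ℝ) (ha : 0 < a) (hp : 0 < p) (hq : 0 < q) :
    ∫ x in Ioi (0:ℝ),
      ((1 + a / (q * x)) ^ (q * x) - (1 + a / (p * x)) ^ (p * x)) / x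
      = (Real.exp a - 1) * Real.log (q / p) := by
  have hcongr : ∫ x in Ioi (0:ℝ),
      ((1 + a / (q * x)) ^ (q * x) - (1 + a / (p * x)) ^ (p * x)) / x
      = ∫ x in Ioi (0:ℝ), (FF a (q * x) - FF a (p * x)) / x := by
    apply setIntegral_congr_fun measurableSet_Ioi
    intro x hx
    have hx0 : (0:ℝ) < x := hx
    have h1 : (0:ℝ) < 1 + a / (q * x) := by positivity
    have h2 : (0:ℝ) < 1 + a / (p * x) := by positivity
    simp only
    rw [Real.rpow_def_of_pos h1, Real.rpow_def_of_pos h2, FF, FF]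
  rw [hcongr]
  rcases le_total p q with hpq | hpq
  · exact main_le ha hp hq hpq
  · have := main_le ha hq hp hpq
    have hneg : ∫ x in Ioi (0:ℝ), (FF a (q * x) - FF a (p * x)) / x
        = - ∫ x in Ioi (0:ℝ), (FF a (p * x) - FF a (q * x)) / x := by
      rw [← integral_neg]
      apply setIntegral_congr_fun measurableSet_Ioi
      intro x _
      simp only
      ring
    rw [hneg, this]
    rw [show Real.log (q / p) = - Real.log (p / q) by
      rw [← Real.log_inv, inv_div]]
    ring
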